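/- The fractional Poisson bracket satisfies the Jacobi identity: for C² functions F₁, F₂, F₃ of (q, p_α, p_β), [F₁,[F₂,F₃]_FP]_FP + [F₂,[F₃,F₁]_FP]_FP + [F₃,[F₁,F₂]_FP]_FP = 0. -/

import Mathlib

open Real

/-- The fractional Poisson bracket of `F G : ℝ → ℝ → ℝ → ℝ` in variables `(q, pα, pβ)`:
`[F,G]_FP = (∂F/∂q)(∂G/∂pα + ∂G/∂pβ) - (∂G/∂q)(∂F/∂pα + ∂F/∂pβ)`. -/
noncomputable def FPB (F G : ℝ → ℝ → ℝ → ℝ) : ℝ → ℝ → ℝ → ℝ := fun q pa pb =>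
  (deriv (fun x => F x pa pb) q) *
      (deriv (fun y => G q y pb) pa + deriv (fun z => G q pa z) pb)
    - (deriv (fun x => G x pa pb) q) *
      (deriv (fun y => F q y pb) pa + deriv (fun z => F q pa z) pb)

abbrev E3 : Type := ℝ × ℝ × ℝ

lemma pd1 {f : E3 → ℝ} (hf : Differentiable ℝ f) (q pa pb : ℝ) :
    deriv (fun x => f (x, pa, pb)) q = fderiv ℝ f (q, pa, pb) (1, 0, 0) := by
  have h : HasDerivAt (fun x : ℝ => f (x, pa, pb)) (fderiv ℝ f (q, pa, pb) (1, 0, 0)) q := by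
    have h1 : HasDerivAt (fun x : ℝ => (x, pa, pb)) ((1 : ℝ), (0:ℝ), (0:ℝ)) q := by
      exact (hasDerivAt_id q).prodMk (hasDerivAt_const _ _)
    exact (hf _).hasFDerivAt.comp_hasDerivAt q h1
  exact h.deriv

lemma pd2 {f : E3 → ℝ} (hf : Differentiable ℝ f) (q pa pb : ℝ) :
    deriv (fun y => f (q, y, pb)) pa = fderiv ℝ f (q, pa, pb) (0, 1, 0) := by
  have h : HasDerivAt (fun y : ℝ => f (q, y, pb)) (fderiv ℝ f (q, pa, pb) (0, 1, 0)) pa := by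
    have h1 : HasDerivAt (fun y : ℝ => (q, y, pb)) ((0 : ℝ), (1:ℝ), (0:ℝ)) pa :=
      (hasDerivAt_const _ _).prodMk ((hasDerivAt_id pa).prodMk (hasDerivAt_const _ _))
    exact (hf _).hasFDerivAt.comp_hasDerivAt pa h1
  exact h.deriv

lemma pd3 {f : E3 → ℝ} (hf : Differentiable ℝ f) (q pa pb : ℝ) :
    deriv (fun z => f (q, pa, z)) pb = fderiv ℝ f (q, pa, pb) (0, 0, 1) := by
  have h : HasDerivAt (fun z : ℝ => f (q, pa, z)) (fderiv ℝ f (q, pa, pb) (0, 0, 1)) pb := by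
    have h1 : HasDerivAt (fun z : ℝ => (q, pa, z)) ((0 : ℝ), (0:ℝ), (1:ℝ)) pb :=
      (hasDerivAt_const _ _).prodMk ((hasDerivAt_const _ _).prodMk (hasDerivAt_id pb))
    exact (hf _).hasFDerivAt.comp_hasDerivAt pb h1
  exact h.deriv

/-- bilinear bracket in fderiv form -/
noncomputable def Bk (f g : E3 → ℝ) : E3 → ℝ := fun p =>
  fderiv ℝ f p (1,0,0) * fderiv ℝ g p (0,1,1) - fderiv ℝ g p (1,0,0) * fderiv ℝ f p (0,1,1)

lemma fpb_eq (F G : ℝ → ℝ → ℝ → ℝ)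
    (hF : Differentiable ℝ (fun p : E3 => F p.1 p.2.1 p.2.2))
    (hG : Differentiable ℝ (fun p : E3 => G p.1 p.2.1 p.2.2)) (q pa pb : ℝ) :
    FPB F G q pa pb = Bk (fun p : E3 => F p.1 p.2.1 p.2.2) (fun p : E3 => G p.1 p.2.1 p.2.2) (q, pa, pb) := by
  have e : ((0:ℝ),(1:ℝ),(1:ℝ)) = ((0:ℝ),(1:ℝ),(0:ℝ)) + ((0:ℝ),(0:ℝ),(1:ℝ)) := by simp [Prod.ext_iff]
  simp only [FPB, Bk, pd1 hF, pd1 hG, pd2 hF, pd2 hG, pd3 hF, pd3 hG, e, map_add]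

lemma hasFDerivAt_pdc {g : E3 → ℝ} (hg : ContDiff ℝ 2 g) (p : E3) (w : E3) :
    HasFDerivAt (fun x => fderiv ℝ g x w) ((fderiv ℝ (fderiv ℝ g) p).flip w) p := by
  have hg1 : ContDiff ℝ 1 (fderiv ℝ g) := hg.fderiv_right (by norm_num)
  have hder : HasFDerivAt (fderiv ℝ g) (fderiv ℝ (fderiv ℝ g) p) p :=
    (hg1.differentiable (by norm_num) p).hasFDerivAt
  have := hder.clm_apply (hasFDerivAt_const w p)
  simpa using this

lemma hasFDerivAt_Bk {g h : E3 → ℝ} (hg : ContDiff ℝ 2 g) (hh : ContDiff ℝ 2 h) (p : E3) :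
    HasFDerivAt (Bk g h)
      ((fderiv ℝ g p (1,0,0) • (fderiv ℝ (fderiv ℝ h) p).flip (0,1,1)
          + fderiv ℝ h p (0,1,1) • (fderiv ℝ (fderiv ℝ g) p).flip (1,0,0))
        - (fderiv ℝ h p (1,0,0) • (fderiv ℝ (fderiv ℝ g) p).flip (0,1,1)
          + fderiv ℝ g p (0,1,1) • (fderiv ℝ (fderiv ℝ h) p).flip (1,0,0))) p := by
  exact ((hasFDerivAt_pdc hg p (1,0,0)).mul (hasFDerivAt_pdc hh p (0,1,1))).sub
    ((hasFDerivAt_pdc hh p (1,0,0)).mul (hasFDerivAt_pdc hg p (0,1,1)))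

lemma differentiable_Bk {g h : E3 → ℝ} (hg : ContDiff ℝ 2 g) (hh : ContDiff ℝ 2 h) :
    Differentiable ℝ (Bk g h) := fun p => (hasFDerivAt_Bk hg hh p).differentiableAt

lemma fderiv_Bk_apply {g h : E3 → ℝ} (hg : ContDiff ℝ 2 g) (hh : ContDiff ℝ 2 h) (p w : E3) :
    fderiv ℝ (Bk g h) p w =
      fderiv ℝ g p (1,0,0) * fderiv ℝ (fderiv ℝ h) p w (0,1,1)
        + fderiv ℝ h p (0,1,1) * fderiv ℝ (fderiv ℝ g) p w (1,0,0)
      - (fderiv ℝ h p (1,0,0) * fderiv ℝ (fderiv ℝ g) p w (0,1,1)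
        + fderiv ℝ g p (0,1,1) * fderiv ℝ (fderiv ℝ h) p w (1,0,0)) := by
  rw [(hasFDerivAt_Bk hg hh p).fderiv]
  simp [ContinuousLinearMap.flip_apply]


/-- Jacobi identity for the fractional Poisson bracket. -/
theorem fpb_jacobi (F₁ F₂ F₃ : ℝ → ℝ → ℝ → ℝ)
    (hF₁ : ContDiff ℝ 2 (fun p : ℝ × ℝ × ℝ => F₁ p.1 p.2.1 p.2.2))
    (hF₂ : ContDiff ℝ 2 (fun p : ℝ × ℝ × ℝ => F₂ p.1 p.2.1 p.2.2))
    (hF₃ : ContDiff ℝ 2 (fun p : ℝ × ℝ × ℝ => F₃ p.1 p.2.1 p.2.2))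
    (q pa pb : ℝ) :
    FPB F₁ (FPB F₂ F₃) q pa pb + FPB F₂ (FPB F₃ F₁) q pa pb
      + FPB F₃ (FPB F₁ F₂) q pa pb = 0 := by
  set f₁ : E3 → ℝ := fun p => F₁ p.1 p.2.1 p.2.2 with hf₁
  set f₂ : E3 → ℝ := fun p => F₂ p.1 p.2.1 p.2.2 with hf₂
  set f₃ : E3 → ℝ := fun p => F₃ p.1 p.2.1 p.2.2 with hf₃
  have hd₁ : Differentiable ℝ f₁ := hF₁.differentiable (by norm_num)
  have hd₂ : Differentiable ℝ f₂ := hF₂.differentiable (by norm_num)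
  have hd₃ : Differentiable ℝ f₃ := hF₃.differentiable (by norm_num)
  have he23 : (fun p : E3 => FPB F₂ F₃ p.1 p.2.1 p.2.2) = Bk f₂ f₃ :=
    funext fun p => fpb_eq F₂ F₃ hd₂ hd₃ p.1 p.2.1 p.2.2
  have he31 : (fun p : E3 => FPB F₃ F₁ p.1 p.2.1 p.2.2) = Bk f₃ f₁ :=
    funext fun p => fpb_eq F₃ F₁ hd₃ hd₁ p.1 p.2.1 p.2.2
  have he12 : (fun p : E3 => FPB F₁ F₂ p.1 p.2.1 p.2.2) = Bk f₁ f₂ :=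
    funext fun p => fpb_eq F₁ F₂ hd₁ hd₂ p.1 p.2.1 p.2.2
  have t1 : FPB F₁ (FPB F₂ F₃) q pa pb = Bk f₁ (Bk f₂ f₃) (q, pa, pb) := by
    rw [fpb_eq F₁ (FPB F₂ F₃) hd₁ (he23 ▸ differentiable_Bk hF₂ hF₃), ← hf₁, he23]
  have t2 : FPB F₂ (FPB F₃ F₁) q pa pb = Bk f₂ (Bk f₃ f₁) (q, pa, pb) := by
    rw [fpb_eq F₂ (FPB F₃ F₁) hd₂ (he31 ▸ differentiable_Bk hF₃ hF₁), ← hf₂, he31]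
  have t3 : FPB F₃ (FPB F₁ F₂) q pa pb = Bk f₃ (Bk f₁ f₂) (q, pa, pb) := by
    rw [fpb_eq F₃ (FPB F₁ F₂) hd₃ (he12 ▸ differentiable_Bk hF₁ hF₂), ← hf₃, he12]
  rw [t1, t2, t3]
  set p : E3 := (q, pa, pb)
  have hs₁ := (hF₁.contDiffAt.isSymmSndFDerivAt (by norm_num) (x := p)).eq
    ((1:ℝ),(0:ℝ),(0:ℝ)) ((0:ℝ),(1:ℝ),(1:ℝ))
  have hs₂ := (hF₂.contDiffAt.isSymmSndFDerivAt (by norm_num) (x := p)).eq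
    ((1:ℝ),(0:ℝ),(0:ℝ)) ((0:ℝ),(1:ℝ),(1:ℝ))
  have hs₃ := (hF₃.contDiffAt.isSymmSndFDerivAt (by norm_num) (x := p)).eq
    ((1:ℝ),(0:ℝ),(0:ℝ)) ((0:ℝ),(1:ℝ),(1:ℝ))
  simp only [Bk, fderiv_Bk_apply hF₂ hF₃, fderiv_Bk_apply hF₃ hF₁, fderiv_Bk_apply hF₁ hF₂,
    ← hf₁, ← hf₂, ← hf₃]

  rw [hs₁, hs₂, hs₃]
  ring
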